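/- For all real t with 0 < t ≤ 1.1, 2π·sin²t + (π² + π − 8)·sin⁵t·(sin t − sin³t/3) − π·sin t·(sin t − sin³t/3 + sin⁵t/5) − πt² > 0. -/

import Mathlib

open Real
set_option maxHeartbeats 1000000

lemma sin_lb' (t : ℝ) (h1 : 0 ≤ t) (h2 : t ≤ 2) : t - t^3/6 ≤ Real.sin t := by
  have hd : ∀ x : ℝ, HasDerivAt (fun x : ℝ => Real.sin x - x + x^3/6)
      (Real.cos x - 1 + 3*x^2/6) x := by
    intro x
    have := (Real.hasDerivAt_sin x).sub (hasDerivAt_id x)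
    refine (this.add ((hasDerivAt_pow 3 x).div_const 6)).congr_deriv ?_
    norm_num
  have key : MonotoneOn (fun x : ℝ => Real.sin x - x + x^3/6) (Set.Icc 0 2) := by
    apply monotoneOn_of_deriv_nonneg (convex_Icc 0 2)
    · exact Continuous.continuousOn (by continuity)
    · intro x hx
      exact ((hd x).differentiableAt).differentiableWithinAt
    · intro x hx
      rw [(hd x).deriv]
      nlinarith [Real.one_sub_sq_div_two_le_cos (x := x)]
  have := key (Set.left_mem_Icc.mpr (by norm_num)) (Set.mem_Icc.mpr ⟨h1, h2⟩) h1
  simp at this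
  linarith

lemma aux_x' (x : ℝ) (h1 : 0 < x) (h2 : x ≤ 1.21) :
    -3.141593*(1-(1-x/6)^4)/3 + 2.712*x*(1-x/6)^6 > 0 := by
  nlinarith [pow_pos h1 2, pow_pos h1 3, pow_pos h1 4, pow_pos h1 5, pow_pos h1 6, pow_pos h1 7,
    mul_nonneg (sub_nonneg.mpr h2) h1.le,
    mul_nonneg (mul_nonneg (sub_nonneg.mpr h2) h1.le) h1.le,
    mul_nonneg (sub_nonneg.mpr h2) (pow_pos h1 2).le,
    mul_nonneg (sub_nonneg.mpr h2) (pow_pos h1 3).le,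
    mul_nonneg (sub_nonneg.mpr h2) (pow_pos h1 4).le,
    mul_nonneg (sub_nonneg.mpr h2) (pow_pos h1 5).le,
    mul_nonneg (sub_nonneg.mpr h2) (pow_pos h1 6).le]

lemma key_ineq (t s : ℝ) (h1 : 0 < t) (h2 : t ≤ 1.1)
    (hs1 : s ≤ t) (hs2 : t - t^3/6 ≤ s) (hs3 : s ≤ 1) :
    π*(s^2 - t^2) + π*s^4/3 + ((π^2 + π - 8)*(1 - s^2/3) - π/5)*s^6 > 0 := by
  have hpi1 := Real.pi_gt_d6
  have hpi2 := Real.pi_lt_d6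
  have hx2 : t^2 ≤ 1.21 := by nlinarith
  have hl0 : 0 < t - t^3/6 := by nlinarith
  have hs0 : 0 < s := lt_of_lt_of_le hl0 hs2
  have hA : t^2 - s^2 ≤ t^4/3 := by
    nlinarith [mul_le_mul (show t - s ≤ t^3/6 by linarith) (show t + s ≤ 2*t by linarith)
      (by linarith : (0:ℝ) ≤ t + s) (by positivity : (0:ℝ) ≤ t^3/6)]
  have hB : (t - t^3/6)^4 ≤ s^4 := pow_le_pow_left₀ hl0.le hs2 4
  have hC : (t - t^3/6)^6 ≤ s^6 := pow_le_pow_left₀ hl0.le hs2 6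
  have hc : 2.712 ≤ (π^2 + π - 8)*(1 - s^2/3) - π/5 := by
    have hq : s^2 ≤ 1 := by nlinarith
    nlinarith [sq_nonneg s, mul_nonneg (show (0:ℝ) ≤ 1 - s^2 by linarith)
      (show (0:ℝ) ≤ π^2 + π - 8 by nlinarith)]
  have hx := aux_x' (t^2) (by positivity) hx2
  have hP : 0 ≤ t^4 * (1 - (1 - t^2/6)^4) := by
    apply mul_nonneg (by positivity)
    nlinarith [pow_pos h1 2, pow_pos h1 4, pow_pos h1 6]
  have hF : π*(-(t^4/3)) + π*(t - t^3/6)^4/3 + 2.712*(t - t^3/6)^6 > 0 := by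
    nlinarith [mul_pos (pow_pos h1 4) hx, mul_nonneg (show (0:ℝ) ≤ 3.141593 - π by linarith) hP]
  nlinarith [mul_nonneg (sub_nonneg.mpr hc) (pow_pos hs0 6).le,
    mul_nonneg (sub_nonneg.mpr hC) (show (0:ℝ) ≤ 2.712 by norm_num),
    mul_nonneg (sub_nonneg.mpr hB) pi_pos.le,
    mul_nonneg (sub_nonneg.mpr hA) pi_pos.le, hF]

theorem stmt16 (t : ℝ) (h1 : 0 < t) (h2 : t ≤ 1.1) :
    2*π*(sin t)^2 + (π^2 + π - 8)*(sin t)^5*(sin t - (sin t)^3/3)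
    - π*sin t*(sin t - (sin t)^3/3 + (sin t)^5/5) - π*t^2 > 0 := by
  have hs1 : sin t ≤ t := (Real.sin_lt h1).le
  have hs2 : t - t^3/6 ≤ sin t := sin_lb' t h1.le (by linarith)
  have hs3 : sin t ≤ 1 := Real.sin_le_one t
  have key := key_ineq t (sin t) h1 h2 hs1 hs2 hs3
  have heq : 2*π*(sin t)^2 + (π^2 + π - 8)*(sin t)^5*(sin t - (sin t)^3/3)
      - π*sin t*(sin t - (sin t)^3/3 + (sin t)^5/5) - π*t^2
      = π*((sin t)^2 - t^2) + π*(sin t)^4/3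
        + ((π^2 + π - 8)*(1 - (sin t)^2/3) - π/5)*(sin t)^6 := by ring
  rw [heq]
  exact key
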